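/- Evaluation of the D_N integral for f ≡ 1: −(1/(2πi)) ∮ (∏_{i=1}^{N} (a_i − ν_i z)/(a_i − z)) ∏_{j=1}^{T} ((1 − q u_j z)/(1 − u_j z)) dz/z, over a contour enclosing a_1,…,a_N only, equals 1 − q^T ν_1⋯ν_N − (1 − q) ∑_{j=1}^{T} (∏_{i=1}^{N} (ν_i − a_i u_j)/(1 − a_i u_j)) ∏_{β≠j} (u_j − q u_β)/(u_j − u_β). -/

import Mathlib

open Complex Metric

namespace DNaux

open Finset Polynomial
variable {N T : ℕ}

noncomputable def Acoef (q : ℂ) (a ν : Fin N → ℂ) (u : Fin T → ℂ) (i : Fin N) : ℂ :=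
  -((1 - ν i) * (∏ k ∈ Finset.univ.erase i, (a k - ν k * a i) / (a k - a i)) *
    ∏ j : Fin T, (1 - q * u j * a i) / (1 - u j * a i))

noncomputable def Bcoef (q : ℂ) (a ν : Fin N → ℂ) (u : Fin T → ℂ) (j : Fin T) : ℂ :=
  -((1 - q) * (∏ i : Fin N, (ν i - a i * u j) / (1 - a i * u j)) *
    ∏ b ∈ Finset.univ.erase j, (u j - q * u b) / (u j - u b))

noncomputable def p1 (q : ℂ) (a ν : Fin N → ℂ) (u : Fin T → ℂ) : Polynomial ℂ :=
  (∏ i : Fin N, (C (a i) - C (ν i) * X)) * ∏ j : Fin T, (C 1 - C (q * u j) * X)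

noncomputable def p2 (q : ℂ) (a ν : Fin N → ℂ) (u : Fin T → ℂ) : Polynomial ℂ :=
  (∏ i : Fin N, (C (a i) - X)) * ∏ j : Fin T, (C 1 - C (u j) * X)
  - ∑ i : Fin N, C (Acoef q a ν u i) *
      (X * ((∏ k ∈ Finset.univ.erase i, (C (a k) - X)) * ∏ j : Fin T, (C 1 - C (u j) * X)))
  - ∑ j : Fin T, C (Bcoef q a ν u j * u j) *
      ((∏ i : Fin N, (C (a i) - X)) * (X * ∏ b ∈ Finset.univ.erase j, (C 1 - C (u b) * X)))

lemma eval_p1 (q : ℂ) (a ν : Fin N → ℂ) (u : Fin T → ℂ) (z : ℂ) :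
    (p1 q a ν u).eval z =
      (∏ i : Fin N, (a i - ν i * z)) * ∏ j : Fin T, (1 - q * u j * z) := by
  simp [p1, eval_prod]

lemma eval_p2 (q : ℂ) (a ν : Fin N → ℂ) (u : Fin T → ℂ) (z : ℂ) :
    (p2 q a ν u).eval z =
      (∏ i : Fin N, (a i - z)) * ∏ j : Fin T, (1 - u j * z)
      - ∑ i : Fin N, Acoef q a ν u i *
          (z * ((∏ k ∈ Finset.univ.erase i, (a k - z)) * ∏ j : Fin T, (1 - u j * z)))
      - ∑ j : Fin T, (Bcoef q a ν u j * u j) *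
          ((∏ i : Fin N, (a i - z)) * (z * ∏ b ∈ Finset.univ.erase j, (1 - u b * z))) := by
  simp [p2, eval_prod, eval_finset_sum]


lemma eval_eq_zero_pt (q : ℂ) (a ν : Fin N → ℂ) (u : Fin T → ℂ) :
    (p1 q a ν u).eval 0 = (p2 q a ν u).eval 0 := by
  rw [eval_p1, eval_p2]
  simp

lemma eval_eq_a_pt (q : ℂ) (a ν : Fin N → ℂ) (u : Fin T → ℂ)
    (hainj : Function.Injective a) (hau : ∀ i j, u j * a i ≠ 1) (i0 : Fin N) :
    (p1 q a ν u).eval (a i0) = (p2 q a ν u).eval (a i0) := by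
  rw [eval_p1, eval_p2]
  have h1 : (∏ k : Fin N, (a k - a i0)) = 0 :=
    Finset.prod_eq_zero (Finset.mem_univ i0) (sub_self _)
  have hsumj : (∑ j : Fin T, (Bcoef q a ν u j * u j) *
      ((∏ i : Fin N, (a i - a i0)) * (a i0 * ∏ b ∈ Finset.univ.erase j, (1 - u b * a i0)))) = 0 :=
    Finset.sum_eq_zero fun j _ => by rw [h1]; ring
  have hsumi : (∑ i : Fin N, Acoef q a ν u i *
      (a i0 * ((∏ k ∈ Finset.univ.erase i, (a k - a i0)) * ∏ j : Fin T, (1 - u j * a i0))))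
      = Acoef q a ν u i0 *
      (a i0 * ((∏ k ∈ Finset.univ.erase i0, (a k - a i0)) * ∏ j : Fin T, (1 - u j * a i0))) := by
    refine Finset.sum_eq_single i0 (fun i _ hi => ?_) (fun h => absurd (Finset.mem_univ i0) h)
    have : (∏ k ∈ Finset.univ.erase i, (a k - a i0)) = 0 :=
      Finset.prod_eq_zero (Finset.mem_erase.mpr ⟨hi.symm, Finset.mem_univ i0⟩) (sub_self _)
    rw [this]; ring
  rw [hsumj, hsumi, h1, zero_mul, zero_sub, sub_zero]
  have hP' : (∏ k ∈ Finset.univ.erase i0, (a k - a i0)) ≠ 0 := by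
    rw [Finset.prod_ne_zero_iff]
    intro k hk
    exact sub_ne_zero.mpr (fun h => (Finset.mem_erase.mp hk).1 (hainj h))
  have hE2 : (∏ j : Fin T, (1 - u j * a i0)) ≠ 0 := by
    rw [Finset.prod_ne_zero_iff]
    intro j _
    exact sub_ne_zero.mpr fun h => hau i0 j h.symm
  rw [Acoef, Finset.prod_div_distrib, Finset.prod_div_distrib,
    ← Finset.mul_prod_erase Finset.univ _ (Finset.mem_univ i0)]
  field_simp
  have hE3 : (∏ x : Fin T, (1 - a i0 * u x)) ≠ 0 :=
    Finset.prod_ne_zero_iff.mpr fun j _ => by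
      rw [mul_comm]; exact sub_ne_zero.mpr fun h => hau i0 j h.symm
  rw [mul_div_cancel_right₀ _ hE3]


lemma eval_eq_u_pt (q : ℂ) (a ν : Fin N → ℂ) (u : Fin T → ℂ)
    (hu0 : ∀ j, u j ≠ 0) (huinj : Function.Injective u)
    (hau : ∀ i j, u j * a i ≠ 1) (j0 : Fin T) :
    (p1 q a ν u).eval ((u j0)⁻¹) = (p2 q a ν u).eval ((u j0)⁻¹) := by
  rw [eval_p1, eval_p2]
  have hw : u j0 ≠ 0 := hu0 j0
  have hQ0 : (∏ j : Fin T, (1 - u j * (u j0)⁻¹)) = 0 :=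
    Finset.prod_eq_zero (Finset.mem_univ j0) (by rw [mul_inv_cancel₀ hw, sub_self])
  have hsumi : (∑ i : Fin N, Acoef q a ν u i *
      ((u j0)⁻¹ * ((∏ k ∈ Finset.univ.erase i, (a k - (u j0)⁻¹)) *
        ∏ j : Fin T, (1 - u j * (u j0)⁻¹)))) = 0 :=
    Finset.sum_eq_zero fun i _ => by rw [hQ0]; ring
  have hsumj : (∑ j : Fin T, (Bcoef q a ν u j * u j) *
      ((∏ i : Fin N, (a i - (u j0)⁻¹)) *
        ((u j0)⁻¹ * ∏ b ∈ Finset.univ.erase j, (1 - u b * (u j0)⁻¹))))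
      = (Bcoef q a ν u j0 * u j0) * ((∏ i : Fin N, (a i - (u j0)⁻¹)) *
        ((u j0)⁻¹ * ∏ b ∈ Finset.univ.erase j0, (1 - u b * (u j0)⁻¹))) := by
    refine Finset.sum_eq_single j0 (fun j _ hj => ?_) (fun h => absurd (Finset.mem_univ j0) h)
    have : (∏ b ∈ Finset.univ.erase j, (1 - u b * (u j0)⁻¹)) = 0 :=
      Finset.prod_eq_zero (Finset.mem_erase.mpr ⟨hj.symm, Finset.mem_univ j0⟩)
        (by rw [mul_inv_cancel₀ hw, sub_self])
    rw [this]; ring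
  rw [hsumi, hsumj, hQ0, mul_zero, sub_zero, zero_sub]
  have hfac : (∏ j : Fin T, (1 - q * u j * (u j0)⁻¹))
      = (1 - q) * ∏ b ∈ Finset.univ.erase j0, (1 - q * u b * (u j0)⁻¹) := by
    rw [← Finset.mul_prod_erase Finset.univ _ (Finset.mem_univ j0), mul_assoc,
      mul_inv_cancel₀ hw, mul_one]
  have hXY : (∏ i : Fin N, (a i - ν i * (u j0)⁻¹)) * (∏ i : Fin N, (1 - a i * u j0))
      = (∏ i : Fin N, (ν i - a i * u j0)) * (∏ i : Fin N, (a i - (u j0)⁻¹)) := by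
    rw [← Finset.prod_mul_distrib, ← Finset.prod_mul_distrib]
    refine Finset.prod_congr rfl fun i _ => ?_
    field_simp
    ring
  have hZW : (∏ b ∈ Finset.univ.erase j0, (1 - q * u b * (u j0)⁻¹)) *
        (∏ b ∈ Finset.univ.erase j0, (u j0 - u b))
      = (∏ b ∈ Finset.univ.erase j0, (u j0 - q * u b)) *
        (∏ b ∈ Finset.univ.erase j0, (1 - u b * (u j0)⁻¹)) := by
    rw [← Finset.prod_mul_distrib, ← Finset.prod_mul_distrib]
    refine Finset.prod_congr rfl fun b _ => ?_
    field_simp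
  have hY1 : (∏ i : Fin N, (1 - a i * u j0)) ≠ 0 := by
    rw [Finset.prod_ne_zero_iff]
    intro i _
    exact sub_ne_zero.mpr fun h => hau i j0 (by rw [mul_comm]; exact h.symm)
  have hW1 : (∏ b ∈ Finset.univ.erase j0, (u j0 - u b)) ≠ 0 := by
    rw [Finset.prod_ne_zero_iff]
    intro b hb
    exact sub_ne_zero.mpr fun h => (Finset.mem_erase.mp hb).1 (huinj h.symm)
  rw [hfac, Bcoef, Finset.prod_div_distrib, Finset.prod_div_distrib]
  set X1 := ∏ i : Fin N, (a i - ν i * (u j0)⁻¹) with hX1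
  set X2 := ∏ i : Fin N, (ν i - a i * u j0) with hX2
  set Y1 := ∏ i : Fin N, (1 - a i * u j0) with hY1d
  set Y2 := ∏ i : Fin N, (a i - (u j0)⁻¹) with hY2
  set Z1 := ∏ b ∈ Finset.univ.erase j0, (1 - q * u b * (u j0)⁻¹) with hZ1
  set Z2 := ∏ b ∈ Finset.univ.erase j0, (u j0 - q * u b) with hZ2
  set W1 := ∏ b ∈ Finset.univ.erase j0, (u j0 - u b) with hW1d
  set W2 := ∏ b ∈ Finset.univ.erase j0, (1 - u b * (u j0)⁻¹) with hW2
  have c1 : u j0 * (u j0)⁻¹ = 1 := mul_inv_cancel₀ hw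
  have c2 : Y1 * Y1⁻¹ = 1 := mul_inv_cancel₀ hY1
  have c3 : W1 * W1⁻¹ = 1 := mul_inv_cancel₀ hW1
  linear_combination (-((1 - q) * X2 * Y2 * Z2 * W2 * Y1⁻¹ * W1⁻¹)) * c1 +
    ((1 - q) * X2 * Y2 * Y1⁻¹ * W1⁻¹) * hZW +
    (-((1 - q) * X2 * Y2 * Z1 * Y1⁻¹)) * c3 +
    ((1 - q) * Z1 * Y1⁻¹) * hXY +
    (-((1 - q) * X1 * Z1)) * c2

lemma natDegree_prod_le_card {ι : Type*} (s : Finset ι) (f : ι → Polynomial ℂ)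
    (h : ∀ i ∈ s, (f i).natDegree ≤ 1) : (∏ i ∈ s, f i).natDegree ≤ s.card := by
  refine le_trans (Polynomial.natDegree_prod_le s f) ?_
  calc ∑ i ∈ s, (f i).natDegree ≤ ∑ _i ∈ s, 1 := Finset.sum_le_sum h
  _ = s.card := by simp

lemma natDegree_lin_le (x y : ℂ) : (C x - C y * X).natDegree ≤ 1 := by
  refine le_trans (Polynomial.natDegree_sub_le _ _) ?_
  simp only [natDegree_C, max_le_iff]
  exact ⟨Nat.zero_le 1, le_trans (Polynomial.natDegree_C_mul_le _ _) (by simp)⟩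

lemma natDegree_lin_le' (x : ℂ) : (C x - X : Polynomial ℂ).natDegree ≤ 1 := by
  refine le_trans (Polynomial.natDegree_sub_le _ _) ?_
  simp

lemma natDegree_p1_le (q : ℂ) (a ν : Fin N → ℂ) (u : Fin T → ℂ) :
    (p1 q a ν u).natDegree ≤ N + T := by
  refine le_trans Polynomial.natDegree_mul_le (add_le_add ?_ ?_)
  · exact le_trans (natDegree_prod_le_card _ _ fun i _ => natDegree_lin_le _ _) (by simp)
  · exact le_trans (natDegree_prod_le_card _ _ fun j _ => natDegree_lin_le _ _) (by simp)

lemma natDegree_p2_le (q : ℂ) (a ν : Fin N → ℂ) (u : Fin T → ℂ) :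
    (p2 q a ν u).natDegree ≤ N + T := by
  have hP : (∏ i : Fin N, (C (a i) - X : Polynomial ℂ)).natDegree ≤ N :=
    le_trans (natDegree_prod_le_card _ _ fun i _ => natDegree_lin_le' _) (by simp)
  have hQ : (∏ j : Fin T, (C 1 - C (u j) * X : Polynomial ℂ)).natDegree ≤ T :=
    le_trans (natDegree_prod_le_card _ _ fun j _ => natDegree_lin_le _ _) (by simp)
  refine le_trans (Polynomial.natDegree_sub_le _ _)
    (max_le (le_trans (Polynomial.natDegree_sub_le _ _) (max_le ?_ ?_)) ?_)
  · exact le_trans Polynomial.natDegree_mul_le (add_le_add hP hQ)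
  · refine Polynomial.natDegree_sum_le_of_forall_le _ _ fun i _ => ?_
    have hN : 1 ≤ N := Nat.one_le_iff_ne_zero.mpr (by rintro rfl; exact absurd i.2 (by simp))
    have h2 : (∏ k ∈ Finset.univ.erase i, (C (a k) - X : Polynomial ℂ)).natDegree ≤ N - 1 :=
      le_trans (natDegree_prod_le_card _ _ fun k _ => natDegree_lin_le' _)
        (by simp [Finset.card_erase_of_mem])
    calc (C (Acoef q a ν u i) * (X * ((∏ k ∈ Finset.univ.erase i, (C (a k) - X)) *
        ∏ j : Fin T, (C 1 - C (u j) * X)))).natDegree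
        ≤ (C (Acoef q a ν u i)).natDegree + (X * ((∏ k ∈ Finset.univ.erase i, (C (a k) - X)) *
          ∏ j : Fin T, (C 1 - C (u j) * X))).natDegree := natDegree_mul_le
      _ ≤ 0 + ((X : Polynomial ℂ).natDegree +
          ((∏ k ∈ Finset.univ.erase i, (C (a k) - X)).natDegree
          + (∏ j : Fin T, (C 1 - C (u j) * X)).natDegree)) := by
          simp only [natDegree_C]
          exact add_le_add_right (le_trans natDegree_mul_le (add_le_add_right natDegree_mul_le _)) _
      _ ≤ 0 + (1 + ((N - 1) + T)) := by
          rw [natDegree_X]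
          exact add_le_add_right (add_le_add_right (add_le_add h2 hQ) _) _
      _ ≤ N + T := by omega
  · refine Polynomial.natDegree_sum_le_of_forall_le _ _ fun j _ => ?_
    have hT : 1 ≤ T := Nat.one_le_iff_ne_zero.mpr (by rintro rfl; exact absurd j.2 (by simp))
    have h2 : (∏ b ∈ Finset.univ.erase j, (C 1 - C (u b) * X : Polynomial ℂ)).natDegree ≤ T - 1 :=
      le_trans (natDegree_prod_le_card _ _ fun k _ => natDegree_lin_le _ _)
        (by simp [Finset.card_erase_of_mem])
    calc (C (Bcoef q a ν u j * u j) * ((∏ i : Fin N, (C (a i) - X)) *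
        (X * ∏ b ∈ Finset.univ.erase j, (C 1 - C (u b) * X)))).natDegree
        ≤ (C (Bcoef q a ν u j * u j)).natDegree + ((∏ i : Fin N, (C (a i) - X)) *
          (X * ∏ b ∈ Finset.univ.erase j, (C 1 - C (u b) * X))).natDegree := natDegree_mul_le
      _ ≤ 0 + ((∏ i : Fin N, (C (a i) - X)).natDegree + ((X : Polynomial ℂ).natDegree +
          (∏ b ∈ Finset.univ.erase j, (C 1 - C (u b) * X)).natDegree)) := by
          simp only [natDegree_C]
          exact add_le_add_right (le_trans natDegree_mul_le (add_le_add_right natDegree_mul_le _)) _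
      _ ≤ 0 + (N + (1 + (T - 1))) := by
          rw [natDegree_X]
          exact add_le_add_right (add_le_add hP (add_le_add_right h2 _)) _
      _ ≤ N + T := by omega

noncomputable def pts (a : Fin N → ℂ) (u : Fin T → ℂ) : Finset ℂ :=
  insert 0 ((Finset.univ.image a) ∪ (Finset.univ.image fun j => (u j)⁻¹))

lemma card_pts (a : Fin N → ℂ) (u : Fin T → ℂ) (hainj : Function.Injective a) (hu0 : ∀ j, u j ≠ 0)
    (huinj : Function.Injective u) (ha0 : ∀ i, a i ≠ 0) (hau : ∀ i j, u j * a i ≠ 1) :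
    (pts a u).card = N + T + 1 := by
  have hinvinj : Function.Injective fun j => (u j)⁻¹ := fun j₁ j₂ h => by
    apply huinj; exact inv_injective h
  have hdisj : Disjoint (Finset.univ.image a) (Finset.univ.image fun j => (u j)⁻¹) := by
    rw [Finset.disjoint_left]
    rintro x hx hy
    simp only [Finset.mem_image, Finset.mem_univ, true_and] at hx hy
    obtain ⟨i, rfl⟩ := hx
    obtain ⟨j, hj⟩ := hy
    apply hau i j
    rw [← hj, mul_inv_cancel₀ (hu0 j)]
  have h0 : (0 : ℂ) ∉ (Finset.univ.image a) ∪ (Finset.univ.image fun j => (u j)⁻¹) := by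
    simp only [Finset.mem_union, Finset.mem_image, Finset.mem_univ, true_and, not_or]
    constructor
    · rintro ⟨i, hi⟩; exact ha0 i hi
    · rintro ⟨j, hj⟩; exact hu0 j (inv_eq_zero.mp hj)
  rw [pts, Finset.card_insert_of_notMem h0, Finset.card_union_of_disjoint hdisj,
    Finset.card_image_of_injective _ hainj, Finset.card_image_of_injective _ hinvinj]
  simp


theorem poly_eq (q : ℂ) (a ν : Fin N → ℂ) (u : Fin T → ℂ)
    (hainj : Function.Injective a) (hu0 : ∀ j, u j ≠ 0) (huinj : Function.Injective u)
    (ha0 : ∀ i, a i ≠ 0) (hau : ∀ i j, u j * a i ≠ 1) :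
    p1 q a ν u = p2 q a ν u := by
  have hcard := card_pts a u hainj hu0 huinj ha0 hau
  have hdeg : ∀ p : Polynomial ℂ, p.natDegree ≤ N + T → p.degree < (pts a u).card := by
    intro p hp
    refine lt_of_le_of_lt Polynomial.degree_le_natDegree ?_
    rw [hcard]
    exact_mod_cast Nat.lt_succ_of_le hp
  refine Polynomial.eq_of_degrees_lt_of_eval_finset_eq _ (hdeg _ (natDegree_p1_le q a ν u))
    (hdeg _ (natDegree_p2_le q a ν u)) ?_
  intro x hx
  rw [pts, Finset.mem_insert, Finset.mem_union] at hx
  rcases hx with rfl | hx | hx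
  · exact eval_eq_zero_pt q a ν u
  · simp only [Finset.mem_image, Finset.mem_univ, true_and] at hx
    obtain ⟨i0, rfl⟩ := hx
    exact eval_eq_a_pt q a ν u hainj hau i0
  · simp only [Finset.mem_image, Finset.mem_univ, true_and] at hx
    obtain ⟨j0, rfl⟩ := hx
    exact eval_eq_u_pt q a ν u hu0 huinj hau j0

lemma prod_neg_card {ι : Type*} (s : Finset ι) (f : ι → ℂ) :
    ∏ i ∈ s, (-(f i)) = (-1) ^ s.card * ∏ i ∈ s, f i := by
  calc ∏ i ∈ s, (-(f i)) = ∏ i ∈ s, ((-1) * f i) := by simp [neg_one_mul]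
  _ = (∏ _i ∈ s, (-1 : ℂ)) * ∏ i ∈ s, f i := Finset.prod_mul_distrib
  _ = (-1) ^ s.card * ∏ i ∈ s, f i := by rw [Finset.prod_const]

lemma coeff_lin_prod {ι : Type*} (s : Finset ι) (x y : ι → ℂ) :
    (∏ i ∈ s, (C (x i) - C (y i) * X)).coeff s.card = (-1) ^ s.card * ∏ i ∈ s, y i := by
  have h := Polynomial.coeff_prod_of_natDegree_le (s := s)
    (f := fun i => C (x i) - C (y i) * X) 1 (fun i _ => natDegree_lin_le _ _)
  rw [mul_one] at h
  rw [h, ← prod_neg_card]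
  refine Finset.prod_congr rfl fun i _ => ?_
  simp [coeff_one]

lemma coeff_lin_prod' {ι : Type*} (s : Finset ι) (x : ι → ℂ) :
    (∏ i ∈ s, (C (x i) - X)).coeff s.card = (-1) ^ s.card := by
  have h := Polynomial.coeff_prod_of_natDegree_le (s := s)
    (f := fun i => C (x i) - X) 1 (fun i _ => natDegree_lin_le' _)
  rw [mul_one] at h
  rw [h]
  calc ∏ i ∈ s, (C (x i) - X : Polynomial ℂ).coeff 1 = ∏ _i ∈ s, (-1 : ℂ) :=
        Finset.prod_congr rfl fun i _ => by simp
  _ = (-1) ^ s.card := Finset.prod_const _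

lemma coeff_lin_prod_fin {n : ℕ} (x y : Fin n → ℂ) :
    (∏ i : Fin n, (C (x i) - C (y i) * X)).coeff n = (-1) ^ n * ∏ i : Fin n, y i := by
  have h := coeff_lin_prod Finset.univ x y
  simpa using h

lemma coeff_lin_prod_fin' {n : ℕ} (x : Fin n → ℂ) :
    (∏ i : Fin n, (C (x i) - X)).coeff n = (-1) ^ n := by
  have h := coeff_lin_prod' Finset.univ x
  simpa using h

lemma coeff_X_mul_pred (p : Polynomial ℂ) (n : ℕ) (hn : 1 ≤ n) :
    (X * p).coeff n = p.coeff (n - 1) := by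
  obtain ⟨m, rfl⟩ : ∃ m, n = m + 1 := ⟨n - 1, by omega⟩
  simp [coeff_X_mul]

theorem key_scalar (q : ℂ) (a ν : Fin N → ℂ) (u : Fin T → ℂ)
    (hainj : Function.Injective a) (hu0 : ∀ j, u j ≠ 0) (huinj : Function.Injective u)
    (ha0 : ∀ i, a i ≠ 0) (hau : ∀ i j, u j * a i ≠ 1) :
    q ^ T * (∏ i : Fin N, ν i)
      = 1 + (∑ i : Fin N, Acoef q a ν u i) + ∑ j : Fin T, Bcoef q a ν u j := by
  have hP : (∏ i : Fin N, (C (a i) - X : Polynomial ℂ)).natDegree ≤ N :=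
    le_trans (natDegree_prod_le_card _ _ fun i _ => natDegree_lin_le' _) (by simp)
  have hQ : (∏ j : Fin T, (C 1 - C (u j) * X : Polynomial ℂ)).natDegree ≤ T :=
    le_trans (natDegree_prod_le_card _ _ fun j _ => natDegree_lin_le _ _) (by simp)
  have h := congrArg (fun p => Polynomial.coeff p (N + T))
    (poly_eq q a ν u hainj hu0 huinj ha0 hau)
  simp only [p1, p2, coeff_sub, finset_sum_coeff] at h
  -- coefficient of p1
  have h1 : ((∏ i : Fin N, (C (a i) - C (ν i) * X)) *
      ∏ j : Fin T, (C 1 - C (q * u j) * X)).coeff (N + T)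
      = ((-1) ^ N * ∏ i : Fin N, ν i) * ((-1) ^ T * (q ^ T * ∏ j : Fin T, u j)) := by
    rw [Polynomial.coeff_mul_add_eq_of_natDegree_le
      (le_trans (natDegree_prod_le_card _ _ fun i _ => natDegree_lin_le _ _) (by simp))
      (le_trans (natDegree_prod_le_card _ _ fun j _ => natDegree_lin_le _ _) (by simp)),
      coeff_lin_prod_fin, coeff_lin_prod_fin]
    rw [Finset.prod_mul_distrib, Finset.prod_const]
    simp
  have h2 : ((∏ i : Fin N, (C (a i) - X)) *
      ∏ j : Fin T, (C 1 - C (u j) * X)).coeff (N + T)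
      = (-1) ^ N * ((-1) ^ T * ∏ j : Fin T, u j) := by
    rw [Polynomial.coeff_mul_add_eq_of_natDegree_le hP hQ, coeff_lin_prod_fin', coeff_lin_prod_fin]
  have h3 : ∀ i : Fin N, (C (Acoef q a ν u i) * (X * ((∏ k ∈ Finset.univ.erase i, (C (a k) - X)) *
      ∏ j : Fin T, (C 1 - C (u j) * X)))).coeff (N + T)
      = -(Acoef q a ν u i * ((-1) ^ N * ((-1) ^ T * ∏ j : Fin T, u j))) := by
    intro i
    have hN : 1 ≤ N := Nat.one_le_iff_ne_zero.mpr (by rintro rfl; exact absurd i.2 (by simp))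
    have hidx : N + T = ((N - 1) + T) + 1 := by omega
    rw [coeff_C_mul, hidx, coeff_X_mul]
    have hcard : (Finset.univ.erase i).card = N - 1 := by
      simp [Finset.card_erase_of_mem]
    have hP' : (∏ k ∈ Finset.univ.erase i, (C (a k) - X : Polynomial ℂ)).natDegree ≤ N - 1 :=
      le_trans (natDegree_prod_le_card _ _ fun k _ => natDegree_lin_le' _) (le_of_eq hcard)
    rw [Polynomial.coeff_mul_add_eq_of_natDegree_le hP' hQ]
    have hcp := coeff_lin_prod' (Finset.univ.erase i) a
    rw [hcard] at hcp
    rw [hcp, coeff_lin_prod_fin]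
    have hsign : ((-1 : ℂ)) ^ N = -(-1) ^ (N - 1) := by
      conv_lhs => rw [show N = (N - 1) + 1 by omega]
      rw [pow_succ]
      ring
    rw [hsign]
    ring
  have h4 : ∀ j : Fin T, (C (Bcoef q a ν u j * u j) * ((∏ i : Fin N, (C (a i) - X)) *
      (X * ∏ b ∈ Finset.univ.erase j, (C 1 - C (u b) * X)))).coeff (N + T)
      = -(Bcoef q a ν u j * ((-1) ^ N * ((-1) ^ T * ∏ b : Fin T, u b))) := by
    intro j
    have hT : 1 ≤ T := Nat.one_le_iff_ne_zero.mpr (by rintro rfl; exact absurd j.2 (by simp))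
    have hcard : (Finset.univ.erase j).card = T - 1 := by
      simp [Finset.card_erase_of_mem]
    have hQ' : (∏ b ∈ Finset.univ.erase j, (C 1 - C (u b) * X : Polynomial ℂ)).natDegree ≤ T - 1 :=
      le_trans (natDegree_prod_le_card _ _ fun k _ => natDegree_lin_le _ _) (le_of_eq hcard)
    have hXQ : (X * ∏ b ∈ Finset.univ.erase j, (C 1 - C (u b) * X : Polynomial ℂ)).natDegree
        ≤ T := by
      refine le_trans natDegree_mul_le ?_
      rw [natDegree_X]
      omega
    rw [coeff_C_mul, Polynomial.coeff_mul_add_eq_of_natDegree_le hP hXQ]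
    rw [coeff_X_mul_pred _ _ hT]
    have hcp := coeff_lin_prod (Finset.univ.erase j) (fun _ => (1 : ℂ)) u
    rw [hcard] at hcp
    rw [hcp, coeff_lin_prod_fin']
    have hu : u j * ∏ b ∈ Finset.univ.erase j, u b = ∏ b : Fin T, u b :=
      Finset.mul_prod_erase Finset.univ u (Finset.mem_univ j)
    have hsign : ((-1 : ℂ)) ^ T = -(-1) ^ (T - 1) := by
      conv_lhs => rw [show T = (T - 1) + 1 by omega]
      rw [pow_succ]
      ring
    rw [hsign, ← hu]
    ring
  rw [h1, h2, Finset.sum_congr rfl (fun i _ => h3 i), Finset.sum_congr rfl (fun j _ => h4 j)] at h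
  have hD : ((-1 : ℂ)) ^ N * ((-1) ^ T * ∏ j : Fin T, u j) ≠ 0 := by
    refine mul_ne_zero (pow_ne_zero _ (by norm_num)) (mul_ne_zero (pow_ne_zero _ (by norm_num)) ?_)
    rw [Finset.prod_ne_zero_iff]
    exact fun j _ => hu0 j
  apply mul_left_cancel₀ hD
  calc ((-1 : ℂ)) ^ N * ((-1) ^ T * ∏ j : Fin T, u j) * (q ^ T * ∏ i : Fin N, ν i)
      = ((-1) ^ N * ∏ i : Fin N, ν i) * ((-1) ^ T * (q ^ T * ∏ j : Fin T, u j)) := by ring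
  _ = ((-1) ^ N * ((-1) ^ T * ∏ j : Fin T, u j))
      * (1 + (∑ i : Fin N, Acoef q a ν u i) + ∑ j : Fin T, Bcoef q a ν u j) := by
      rw [h]
      rw [Finset.sum_neg_distrib, Finset.sum_neg_distrib, ← Finset.sum_mul, ← Finset.sum_mul]
      ring

theorem pointwise (q : ℂ) (a ν : Fin N → ℂ) (u : Fin T → ℂ)
    (hainj : Function.Injective a) (hu0 : ∀ j, u j ≠ 0) (huinj : Function.Injective u)
    (ha0 : ∀ i, a i ≠ 0) (hau : ∀ i j, u j * a i ≠ 1)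
    (z : ℂ) (hz0 : z ≠ 0) (hza : ∀ i, a i - z ≠ 0) (hzu : ∀ j, 1 - u j * z ≠ 0) :
    (∏ i : Fin N, (a i - ν i * z) / (a i - z)) *
        (∏ j : Fin T, (1 - q * u j * z) / (1 - u j * z)) / z
      = z⁻¹ + (∑ i : Fin N, Acoef q a ν u i * (z - a i)⁻¹)
        + ∑ j : Fin T, Bcoef q a ν u j * (z - (u j)⁻¹)⁻¹ := by
  set P2 := ∏ i : Fin N, (a i - z) with hP2
  set Q2 := ∏ j : Fin T, (1 - u j * z) with hQ2
  have hP2ne : P2 ≠ 0 := by rw [hP2, Finset.prod_ne_zero_iff]; exact fun i _ => hza i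
  have hQ2ne : Q2 ≠ 0 := by rw [hQ2, Finset.prod_ne_zero_iff]; exact fun j _ => hzu j
  have hD : z * (P2 * Q2) ≠ 0 := mul_ne_zero hz0 (mul_ne_zero hP2ne hQ2ne)
  apply mul_right_cancel₀ hD
  have cz : z * z⁻¹ = 1 := mul_inv_cancel₀ hz0
  have cP : P2 * P2⁻¹ = 1 := mul_inv_cancel₀ hP2ne
  have cQ : Q2 * Q2⁻¹ = 1 := mul_inv_cancel₀ hQ2ne
  have e1 : (∏ i : Fin N, (a i - ν i * z) / (a i - z)) *
        (∏ j : Fin T, (1 - q * u j * z) / (1 - u j * z)) / z * (z * (P2 * Q2))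
      = (p1 q a ν u).eval z := by
    rw [eval_p1, Finset.prod_div_distrib, Finset.prod_div_distrib, ← hP2, ← hQ2]
    set P1 := ∏ i : Fin N, (a i - ν i * z) with hP1
    set Q1 := ∏ j : Fin T, (1 - q * u j * z) with hQ1
    linear_combination (P1 * Q1 * P2 * P2⁻¹ * Q2 * Q2⁻¹) * cz +
      (P1 * Q1 * Q2 * Q2⁻¹) * cP + (P1 * Q1) * cQ
  rw [e1, poly_eq q a ν u hainj hu0 huinj ha0 hau, eval_p2]
  have hsA : ∀ i : Fin N, Acoef q a ν u i * (z - a i)⁻¹ * (z * (P2 * Q2))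
      = -(Acoef q a ν u i * (z * ((∏ k ∈ Finset.univ.erase i, (a k - z)) * Q2))) := by
    intro i
    have hza' : z - a i ≠ 0 := fun h => hza i (by rw [← neg_sub] at h; simpa using neg_eq_zero.mpr h)
    have c : (z - a i) * (z - a i)⁻¹ = 1 := mul_inv_cancel₀ hza'
    rw [hP2, ← Finset.mul_prod_erase Finset.univ _ (Finset.mem_univ i)]
    linear_combination (-(Acoef q a ν u i * z * (∏ k ∈ Finset.univ.erase i, (a k - z)) * Q2)) * c
  have hsB : ∀ j : Fin T, Bcoef q a ν u j * (z - (u j)⁻¹)⁻¹ * (z * (P2 * Q2))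
      = -((Bcoef q a ν u j * u j) *
          (P2 * (z * ∏ b ∈ Finset.univ.erase j, (1 - u b * z)))) := by
    intro j
    have hzu' : z - (u j)⁻¹ ≠ 0 := by
      intro h
      apply hzu j
      rw [sub_eq_zero.mp h, mul_inv_cancel₀ (hu0 j), sub_self]
    have c : (z - (u j)⁻¹) * (z - (u j)⁻¹)⁻¹ = 1 := mul_inv_cancel₀ hzu'
    have cu : u j * (u j)⁻¹ = 1 := mul_inv_cancel₀ (hu0 j)
    rw [hQ2, ← Finset.mul_prod_erase Finset.univ _ (Finset.mem_univ j)]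
    linear_combination (-(Bcoef q a ν u j * u j * z * P2 *
        ∏ b ∈ Finset.univ.erase j, (1 - u b * z))) * c +
      (-(Bcoef q a ν u j * z * P2 * (∏ b ∈ Finset.univ.erase j, (1 - u b * z)) *
        (z - (u j)⁻¹)⁻¹)) * cu
  rw [add_mul, add_mul, Finset.sum_mul, Finset.sum_mul,
    Finset.sum_congr rfl (fun i _ => hsA i), Finset.sum_congr rfl (fun j _ => hsB j),
    Finset.sum_neg_distrib, Finset.sum_neg_distrib]
  linear_combination (-(P2 * Q2)) * cz

lemma my_circleIntegral_add {f g : ℂ → ℂ} {c : ℂ} {R : ℝ} (hf : CircleIntegrable f c R)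
    (hg : CircleIntegrable g c R) :
    (∮ z in C(c, R), (f z + g z)) = (∮ z in C(c, R), f z) + ∮ z in C(c, R), g z := by
  simp only [circleIntegral, smul_add, intervalIntegral.integral_add hf.out hg.out]

lemma my_circleIntegral_sum {ι : Type*} (s : Finset ι) (f : ι → ℂ → ℂ) (c : ℂ) (R : ℝ)
    (h : ∀ i ∈ s, CircleIntegrable (f i) c R) :
    (∮ z in C(c, R), ∑ i ∈ s, f i z) = ∑ i ∈ s, ∮ z in C(c, R), f i z := by
  simp only [circleIntegral, Finset.smul_sum]
  rw [intervalIntegral.integral_finset_sum]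
  exact fun i hi => (h i hi).out

lemma circleIntegrable_sum {ι : Type*} (s : Finset ι) (f : ι → ℂ → ℂ) {c : ℂ} {R : ℝ}
    (h : ∀ i ∈ s, CircleIntegrable (f i) c R) :
    CircleIntegrable (fun z => ∑ i ∈ s, f i z) c R := by
  classical
  induction s using Finset.induction with
  | empty => simp only [Finset.sum_empty]; exact circleIntegrable_const (0 : ℂ) c R
  | @insert x s hx ih =>
    simp only [Finset.sum_insert hx]
    exact (h x (Finset.mem_insert_self x s)).add
      (ih fun i hi => h i (Finset.mem_insert_of_mem hi))

lemma circleIntegrable_sub_inv_outside {c w : ℂ} {R : ℝ} (hR : 0 ≤ R)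
    (hw : w ∉ sphere c R) : CircleIntegrable (fun z => (z - w)⁻¹) c R := by
  refine ContinuousOn.circleIntegrable hR ?_
  exact (continuousOn_id.sub continuousOn_const).inv₀ fun z hz =>
    sub_ne_zero.2 fun h => hw ((show z = w from h) ▸ hz)

lemma integral_sub_inv_outside {c w : ℂ} {R : ℝ} (hR : 0 ≤ R)
    (hw : w ∉ closedBall c R) : (∮ z in C(c, R), (z - w)⁻¹) = 0 := by
  have hne : ∀ z ∈ closedBall c R, z ≠ w := fun z hz h => hw (h ▸ hz)
  refine circleIntegral_eq_zero_of_differentiable_on_off_countable hR Set.countable_empty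
    ((continuousOn_id.sub continuousOn_const).inv₀ fun z hz => sub_ne_zero.2 (hne z hz)) ?_
  intro z hz
  exact (differentiableAt_id.sub_const w).inv
    (sub_ne_zero.2 (hne z (ball_subset_closedBall hz.1)))

end DNaux

open DNaux in
/-- evaluation of the `D_N` contour integral for `f ≡ 1`:
`-(1/(2πi)) ∮ (∏_{i=1}^{N} (a_i - ν_i z)/(a_i - z)) ∏_{j=1}^{T} ((1 - q u_j z)/(1 - u_j z)) dz/z`,
over a (positively oriented) contour enclosing `a_1,…,a_N` only (in particular
`0` and the points `u_j^{-1}` lie outside), equals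
`1 - q^T ν_1⋯ν_N - (1-q) ∑_{j=1}^{T} (∏_{i=1}^{N}(ν_i - a_i u_j)/(1 - a_i u_j))
 ∏_{β≠j} (u_j - q u_β)/(u_j - u_β)`. -/
theorem DN_integral_evaluation (N T : ℕ) (q : ℂ) (a ν : Fin N → ℂ)
    (u : Fin T → ℂ) (c : ℂ) (R : ℝ) (hR : 0 < R)
    (hain : ∀ i, a i ∈ ball c R) (hainj : Function.Injective a)
    (hu0 : ∀ j, u j ≠ 0) (huinj : Function.Injective u)
    (h0 : (0 : ℂ) ∉ closedBall c R)
    (huout : ∀ j, (u j)⁻¹ ∉ closedBall c R) :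
    -(1 / (2 * Real.pi * Complex.I)) *
        (∮ z in C(c, R),
          (∏ i : Fin N, (a i - ν i * z) / (a i - z)) *
            (∏ j : Fin T, (1 - q * u j * z) / (1 - u j * z)) / z)
      = 1 - q ^ T * (∏ i : Fin N, ν i) -
          (1 - q) * ∑ j : Fin T,
            (∏ i : Fin N, (ν i - a i * u j) / (1 - a i * u j)) *
              ∏ b ∈ Finset.univ.erase j, (u j - q * u b) / (u j - u b) := by
  classical
  have ha0 : ∀ i, a i ≠ 0 := fun i h => h0 (h ▸ ball_subset_closedBall (hain i))
  have hau : ∀ i j, u j * a i ≠ 1 := fun i j h => by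
    have hai : a i = (u j)⁻¹ := eq_inv_of_mul_eq_one_right h
    exact huout j (hai ▸ ball_subset_closedBall (hain i))
  have hzfacts : ∀ z ∈ sphere c R, z ≠ 0 ∧ (∀ i, a i - z ≠ 0) ∧ (∀ j, 1 - u j * z ≠ 0) := by
    intro z hz
    have hzc : z ∈ closedBall c R := sphere_subset_closedBall hz
    refine ⟨fun h => h0 (h ▸ hzc), fun i => sub_ne_zero.2 fun h => ?_, fun j h => ?_⟩
    · have hb := hain i
      rw [h] at hb
      rw [mem_ball] at hb
      rw [mem_sphere] at hz
      exact absurd hz (ne_of_lt hb)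
    · have h1 : u j * z = 1 := by linear_combination -h
      have h2 : z = (u j)⁻¹ := eq_inv_of_mul_eq_one_right h1
      exact huout j (h2 ▸ hzc)
  have hsub : ∀ w : ℂ, w ∉ sphere c R → CircleIntegrable (fun z => (z - w)⁻¹) c R :=
    fun w hw => circleIntegrable_sub_inv_outside hR.le hw
  have hansph : ∀ i, a i ∉ sphere c R := by
    intro i hs
    have hb := hain i
    rw [mem_ball] at hb
    rw [mem_sphere] at hs
    exact absurd hs (ne_of_lt hb)
  have husph : ∀ j, (u j)⁻¹ ∉ sphere c R := fun j hs => huout j (sphere_subset_closedBall hs)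
  have h0sph : (0 : ℂ) ∉ sphere c R := fun hs => h0 (sphere_subset_closedBall hs)
  have hIa : ∀ i : Fin N, CircleIntegrable (fun z => Acoef q a ν u i * (z - a i)⁻¹) c R :=
    fun i => (hsub (a i) (hansph i)).const_mul _
  have hIb : ∀ j : Fin T,
      CircleIntegrable (fun z => Bcoef q a ν u j * (z - (u j)⁻¹)⁻¹) c R :=
    fun j => (hsub _ (husph j)).const_mul _
  have hI0 : CircleIntegrable (fun z : ℂ => z⁻¹) c R := by
    have := hsub 0 h0sph
    simpa using this
  have hIsa : CircleIntegrable (fun z => ∑ i : Fin N, Acoef q a ν u i * (z - a i)⁻¹) c R :=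
    circleIntegrable_sum _ _ fun i _ => hIa i
  have hIsb : CircleIntegrable
      (fun z => ∑ j : Fin T, Bcoef q a ν u j * (z - (u j)⁻¹)⁻¹) c R :=
    circleIntegrable_sum _ _ fun j _ => hIb j
  have hcong : (∮ z in C(c, R),
        (∏ i : Fin N, (a i - ν i * z) / (a i - z)) *
          (∏ j : Fin T, (1 - q * u j * z) / (1 - u j * z)) / z)
      = ∮ z in C(c, R), (z⁻¹ + (∑ i : Fin N, Acoef q a ν u i * (z - a i)⁻¹)
          + ∑ j : Fin T, Bcoef q a ν u j * (z - (u j)⁻¹)⁻¹) := by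
    refine circleIntegral.integral_congr hR.le fun z hz => ?_
    obtain ⟨h1, h2, h3⟩ := hzfacts z hz
    exact pointwise q a ν u hainj hu0 huinj ha0 hau z h1 h2 h3
  have hsplit : (∮ z in C(c, R), (z⁻¹ + (∑ i : Fin N, Acoef q a ν u i * (z - a i)⁻¹)
        + ∑ j : Fin T, Bcoef q a ν u j * (z - (u j)⁻¹)⁻¹))
      = (∮ z in C(c, R), z⁻¹)
        + (∮ z in C(c, R), ∑ i : Fin N, Acoef q a ν u i * (z - a i)⁻¹)
        + ∮ z in C(c, R), ∑ j : Fin T, Bcoef q a ν u j * (z - (u j)⁻¹)⁻¹ := by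
    calc (∮ z in C(c, R), (z⁻¹ + (∑ i : Fin N, Acoef q a ν u i * (z - a i)⁻¹)
          + ∑ j : Fin T, Bcoef q a ν u j * (z - (u j)⁻¹)⁻¹))
        = (∮ z in C(c, R), (z⁻¹ + ∑ i : Fin N, Acoef q a ν u i * (z - a i)⁻¹))
          + ∮ z in C(c, R), ∑ j : Fin T, Bcoef q a ν u j * (z - (u j)⁻¹)⁻¹ :=
        my_circleIntegral_add (hI0.add hIsa) hIsb
      _ = ((∮ z in C(c, R), z⁻¹)
            + ∮ z in C(c, R), ∑ i : Fin N, Acoef q a ν u i * (z - a i)⁻¹)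
          + ∮ z in C(c, R), ∑ j : Fin T, Bcoef q a ν u j * (z - (u j)⁻¹)⁻¹ := by
        rw [show (∮ z in C(c, R), (z⁻¹ + ∑ i : Fin N, Acoef q a ν u i * (z - a i)⁻¹))
            = (∮ z in C(c, R), z⁻¹)
              + ∮ z in C(c, R), ∑ i : Fin N, Acoef q a ν u i * (z - a i)⁻¹
          from my_circleIntegral_add hI0 hIsa]
  have hz0 : (∮ z in C(c, R), z⁻¹) = 0 := by
    have he : (∮ z in C(c, R), z⁻¹) = ∮ z in C(c, R), (z - 0)⁻¹ :=
      circleIntegral.integral_congr hR.le fun z _ => by rw [sub_zero]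
    rw [he]
    exact integral_sub_inv_outside hR.le h0
  have hsumA : (∮ z in C(c, R), ∑ i : Fin N, Acoef q a ν u i * (z - a i)⁻¹)
      = (∑ i : Fin N, Acoef q a ν u i) * (2 * Real.pi * Complex.I) := by
    rw [my_circleIntegral_sum _ _ _ _ fun i _ => hIa i, Finset.sum_mul]
    refine Finset.sum_congr rfl fun i _ => ?_
    rw [circleIntegral.integral_const_mul, circleIntegral.integral_sub_inv_of_mem_ball (hain i)]
  have hsumB : (∮ z in C(c, R), ∑ j : Fin T, Bcoef q a ν u j * (z - (u j)⁻¹)⁻¹) = 0 := by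
    rw [my_circleIntegral_sum _ _ _ _ fun j _ => hIb j]
    refine Finset.sum_eq_zero fun j _ => ?_
    rw [circleIntegral.integral_const_mul, integral_sub_inv_outside hR.le (huout j), mul_zero]
  rw [hcong, hsplit, hz0, hsumA, hsumB, zero_add, add_zero]
  have hpi : (2 * (Real.pi : ℂ) * Complex.I) ≠ 0 := by
    refine mul_ne_zero (mul_ne_zero two_ne_zero ?_) Complex.I_ne_zero
    exact_mod_cast Real.pi_ne_zero
  have hcancel : -(1 / (2 * (Real.pi : ℂ) * Complex.I)) *
      ((∑ i : Fin N, Acoef q a ν u i) * (2 * Real.pi * Complex.I))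
      = -(∑ i : Fin N, Acoef q a ν u i) := by
    field_simp
  rw [hcancel]
  have hkey := key_scalar q a ν u hainj hu0 huinj ha0 hau
  have hB : (∑ j : Fin T, Bcoef q a ν u j)
      = -((1 - q) * ∑ j : Fin T,
          (∏ i : Fin N, (ν i - a i * u j) / (1 - a i * u j)) *
            ∏ b ∈ Finset.univ.erase j, (u j - q * u b) / (u j - u b)) := by
    simp only [Bcoef]
    rw [Finset.sum_neg_distrib, Finset.mul_sum]
    congr 1
    exact Finset.sum_congr rfl fun j _ => by ring
  linear_combination hkey + hB
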